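/- Let θ be a partial action of an inverse semigroupoid S on X and (E,η) the globalization constructed as the quotient of D = {(s,x) : x ∈ X_{s*s}} by ≈, with S-function i : X → E sending x to [e,x] for any idempotent e with x ∈ X_e. Then i is injective, and the action η induces θ through i: for x, y ∈ X and s ∈ S, if i(x) ∈ E_{s*} and η_s(i(x)) = i(y), then x ∈ X_{s*} and θ_s(x) = y. Hence (i, E, η) is a globalization of (X, θ). -/

import Mathlib

structure InvSgpd (S : Type*) (O : Type*) where
  d : S → O
  c : S → O
  mul : S → S → S
  d_mul : ∀ s t, d s = c t → d (mul s t) = d t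
  c_mul : ∀ s t, d s = c t → c (mul s t) = c s
  assoc : ∀ p s t, d p = c s → d s = c t → mul (mul p s) t = mul p (mul s t)
  inv : S → S
  comp_inv : ∀ s, d s = c (inv s)
  inv_comp : ∀ s, d (inv s) = c s
  mul_inv_mul : ∀ s, mul (mul s (inv s)) s = s
  inv_mul_inv : ∀ s, mul (mul (inv s) s) (inv s) = inv s
  inv_unique : ∀ s t, d s = c t → d t = c s →
    mul (mul s t) s = s → mul (mul t s) t = t → t = inv s

namespace InvSgpd
variable {S O : Type*} (G : InvSgpd S O)
def Composable (s t : S) : Prop := G.d s = G.c t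
def Idem (e : S) : Prop := G.Composable e e ∧ G.mul e e = e
def le (s t : S) : Prop :=
  G.d s = G.d t ∧ G.c s = G.c t ∧ s = G.mul t (G.mul (G.inv s) s)
end InvSgpd

/-- A partial action of an inverse semigroupoid `G` on a set (type) `X`:
`dom s` plays the role of `X_s` and `act s` the role of `θ_s : X_{s*} → X_s`
(as a total map whose values are only relevant on `dom (G.inv s)`). -/
structure PAction {S O : Type*} (G : InvSgpd S O) (X : Type*) where
  dom : S → Set X
  act : S → X → X
  maps : ∀ s, ∀ x ∈ dom (G.inv s), act s x ∈ dom s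
  /-- (P1) `θ_e = id_{X_e}` for idempotents. -/
  idem_id : ∀ e, G.Idem e → ∀ x ∈ dom e, act e x = x
  /-- (P1) every point lies in some `X_e` with `e` idempotent. -/
  cover : ∀ x : X, ∃ e, G.Idem e ∧ x ∈ dom e
  /-- (P2) `X_s ⊆ X_{ss*}`. -/
  dom_mono : ∀ s, dom s ⊆ dom (G.mul s (G.inv s))
  /-- (P3) `θ_t⁻¹(X_t ∩ X_{s*}) = X_{(st)*} ∩ X_{t*}` for composable `(s,t)`. -/
  preimage_eq : ∀ s t, G.Composable s t →
    {x | x ∈ dom (G.inv t) ∧ act t x ∈ dom t ∩ dom (G.inv s)}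
      = dom (G.inv (G.mul s t)) ∩ dom (G.inv t)
  /-- (P3) `θ_s (θ_t x) = θ_{st} x` on `X_{(st)*} ∩ X_{t*}`. -/
  mul_act : ∀ s t, G.Composable s t →
    ∀ x ∈ dom (G.inv (G.mul s t)) ∩ dom (G.inv t),
      act s (act t x) = act (G.mul s t) x

namespace PAction
variable {S O X : Type*} {G : InvSgpd S O}

/-- A partial action is global when `X_s = X_{ss*}` for every `s`. -/
def IsGlobal (θ : PAction G X) : Prop := ∀ s, θ.dom s = θ.dom (G.mul s (G.inv s))

end PAction

namespace PAction
variable {S O X : Type*} {G : InvSgpd S O} (θ : PAction G X)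

/-- The set `D = {(s,x) ∈ S × X : x ∈ X_{s*s}}`. -/
def Dset : Type _ := {p : S × X // p.2 ∈ θ.dom (G.mul (G.inv p.1) p.1)}

/-- The relation `∼` on `D`: `(s,x) ∼ (t,y)` iff
(R1) `(t*,s)` is composable, `x ∈ X_{s*t}` and `θ_{t*s}(x) = y`, or
(R2) `s` and `t` are idempotents and `x = y`. -/
def rel (p q : θ.Dset) : Prop :=
  (G.Composable (G.inv q.1.1) p.1.1 ∧
      p.1.2 ∈ θ.dom (G.mul (G.inv p.1.1) q.1.1) ∧
      θ.act (G.mul (G.inv q.1.1) p.1.1) p.1.2 = q.1.2) ∨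
    (G.Idem p.1.1 ∧ G.Idem q.1.1 ∧ p.1.2 = q.1.2)

end PAction

namespace PAction
variable {S O X : Type*} {G : InvSgpd S O} (θ : PAction G X)

/-- The equivalence relation `≈` on `D` generated by `∼`. -/
def relSetoid : Setoid θ.Dset :=
  ⟨Relation.EqvGen θ.rel, Relation.EqvGen.is_equivalence _⟩

/-- `E = D/≈`, the carrier of the constructed globalization. -/
def Env : Type _ := Quotient θ.relSetoid

/-- `E_s`: the image under the quotient map of
`D_s = {(p,x) ∈ D : (s*,p) composable, x ∈ X_{p* s s* p}}`. -/
def Eset (s : S) : Set θ.Env :=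
  {c | ∃ p : θ.Dset, Quotient.mk θ.relSetoid p = c ∧
    G.Composable (G.inv s) p.1.1 ∧
    p.1.2 ∈ θ.dom (G.mul (G.inv p.1.1) (G.mul (G.mul s (G.inv s)) p.1.1))}

end PAction


namespace InvSgpd
variable {S O : Type*} (G : InvSgpd S O)

lemma d_inv (s : S) : G.d (G.inv s) = G.c s := G.inv_comp s
lemma c_inv (s : S) : G.c (G.inv s) = G.d s := (G.comp_inv s).symm

lemma inv_inv (s : S) : G.inv (G.inv s) = s :=
  (G.inv_unique (G.inv s) s (G.inv_comp s) (G.comp_inv s) (G.inv_mul_inv s)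
    (G.mul_inv_mul s)).symm

lemma idem_inv {e : S} (he : G.Idem e) : G.inv e = e :=
  (G.inv_unique e e he.1 he.1 (by rw [he.2, he.2]) (by rw [he.2, he.2])).symm

lemma mul_self_inv_self (s : S) : G.mul s (G.mul (G.inv s) s) = s := by
  rw [← G.assoc s (G.inv s) s (G.comp_inv s) (G.inv_comp s), G.mul_inv_mul]

lemma idem_inv_mul (s : S) : G.Idem (G.mul (G.inv s) s) := by
  constructor
  · show G.d _ = G.c _
    rw [G.d_mul _ _ (G.inv_comp s), G.c_mul _ _ (G.inv_comp s), G.c_inv]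
  · rw [G.assoc (G.inv s) s (G.mul (G.inv s) s) (G.inv_comp s)
      (by rw [G.c_mul _ _ (G.inv_comp s), G.c_inv]), G.mul_self_inv_self]

lemma idem_mul_inv (s : S) : G.Idem (G.mul s (G.inv s)) := by
  have h := G.idem_inv_mul (G.inv s)
  rwa [G.inv_inv] at h

open Classical in
noncomputable def cmul (x y : Option S) : Option S :=
  match x, y with
  | some a, some b => if G.Composable a b then some (G.mul a b) else none
  | _, _ => none

lemma cmul_some {a b : S} (h : G.Composable a b) :
    G.cmul (some a) (some b) = some (G.mul a b) := by
  simp [cmul, h]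

lemma cmul_neg {a b : S} (h : ¬ G.Composable a b) :
    G.cmul (some a) (some b) = none := by
  simp [cmul, h]

lemma cmul_none_right (x : Option S) : G.cmul x none = none := by
  cases x <;> rfl

lemma cmul_none_left (x : Option S) : G.cmul none x = none := by
  cases x <;> rfl

lemma cmul_assoc (x y z : Option S) :
    G.cmul (G.cmul x y) z = G.cmul x (G.cmul y z) := by
  match x, y, z with
  | none, y, z => simp only [G.cmul_none_left]
  | some a, none, z => simp only [G.cmul_none_right, G.cmul_none_left]
  | some a, some b, none => simp only [G.cmul_none_right]
  | some a, some b, some c =>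
    by_cases hab : G.Composable a b
    · by_cases hbc : G.Composable b c
      · have h1 : G.Composable (G.mul a b) c := by
          show G.d _ = _; rw [G.d_mul _ _ hab]; exact hbc
        have h2 : G.Composable a (G.mul b c) := by
          show _ = G.c _; rw [G.c_mul _ _ hbc]; exact hab
        rw [G.cmul_some hab, G.cmul_some hbc, G.cmul_some h1, G.cmul_some h2,
          G.assoc a b c hab hbc]
      · have h1 : ¬ G.Composable (G.mul a b) c := by
          show ¬ G.d _ = _; rw [G.d_mul _ _ hab]; exact hbc
        rw [G.cmul_some hab, G.cmul_neg h1, G.cmul_neg hbc, G.cmul_none_right]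
    · rw [G.cmul_neg hab, G.cmul_none_left]
      by_cases hbc : G.Composable b c
      · have h2 : ¬ G.Composable a (G.mul b c) := by
          show ¬ _ = G.c _; rw [G.c_mul _ _ hbc]; exact hab
        rw [G.cmul_some hbc, G.cmul_neg h2]
      · rw [G.cmul_neg hbc, G.cmul_none_right]

lemma cmul_aia (a : S) :
    G.cmul (some a) (G.cmul (some (G.inv a)) (some a)) = some a := by
  rw [G.cmul_some (G.inv_comp a),
    G.cmul_some (show G.Composable a (G.mul (G.inv a) a) by
      show _ = G.c _; rw [G.c_mul _ _ (G.inv_comp a), G.c_inv]),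
    G.mul_self_inv_self]

lemma cmul_iai (a : S) :
    G.cmul (some (G.inv a)) (G.cmul (some a) (some (G.inv a))) = some (G.inv a) := by
  have h := G.cmul_aia (G.inv a)
  rwa [G.inv_inv] at h

lemma cmul_aia' (a : S) (x : Option S) :
    G.cmul (some a) (G.cmul (some (G.inv a)) (G.cmul (some a) x))
      = G.cmul (some a) x := by
  have h := congrArg (fun y => G.cmul y x) (G.cmul_aia a)
  simpa only [G.cmul_assoc] using h

lemma cmul_iai' (a : S) (x : Option S) :
    G.cmul (some (G.inv a)) (G.cmul (some a) (G.cmul (some (G.inv a)) x))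
      = G.cmul (some (G.inv a)) x := by
  have h := congrArg (fun y => G.cmul y x) (G.cmul_iai a)
  simpa only [G.cmul_assoc] using h

end InvSgpd

namespace InvSgpd
variable {S O : Type*} (G : InvSgpd S O)

lemma idem_mul_idem {e f : S} (he : G.Idem e) (hf : G.Idem f) (hd : G.d e = G.c f) :
    G.Idem (G.mul e f) ∧ G.mul (G.mul f (G.mul e f)) e = G.mul e f := by
  -- all of e, f, m := ef, g := (ef)* live at the object o := d e
  have hce : G.c e = G.d e := he.1.symm
  have hdf : G.d f = G.d e := hf.1.trans hd.symm
  have hcf : G.c f = G.d e := hd.symm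
  have cef : G.Composable e f := hd
  have hdm : G.d (G.mul e f) = G.d e := by rw [G.d_mul _ _ cef]; exact hdf
  have hcm : G.c (G.mul e f) = G.d e := by rw [G.c_mul _ _ cef]; exact hce
  have hdg : G.d (G.inv (G.mul e f)) = G.d e := by rw [G.d_inv]; exact hcm
  have hcg : G.c (G.inv (G.mul e f)) = G.d e := by rw [G.c_inv]; exact hdm
  have hcomp : ∀ u v : S, G.d u = G.d e → G.c v = G.d e → G.Composable u v :=
    fun u v h1 h2 => h1.trans h2.symm
  -- σ-level idempotent rules
  have se : G.cmul (some e) (some e) = some e := by rw [G.cmul_some he.1, he.2]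
  have sf : G.cmul (some f) (some f) = some f := by rw [G.cmul_some hf.1, hf.2]
  have hee' : ∀ x, G.cmul (some e) (G.cmul (some e) x) = G.cmul (some e) x := fun x => by
    have h := congrArg (fun y => G.cmul y x) se
    simpa only [G.cmul_assoc] using h
  have hff' : ∀ x, G.cmul (some f) (G.cmul (some f) x) = G.cmul (some f) x := fun x => by
    have h := congrArg (fun y => G.cmul y x) sf
    simpa only [G.cmul_assoc] using h
  -- σ-level inverse rules for m = ef, expanded in terms of e, f, g
  have hMbase := G.cmul_aia (G.mul e f)
  rw [← G.cmul_some cef] at hMbase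
  simp only [G.cmul_assoc] at hMbase
  -- hMbase : e (f (g (e f))) = e f
  have hGbase := G.cmul_iai (G.mul e f)
  rw [← G.cmul_some cef] at hGbase
  simp only [G.cmul_assoc] at hGbase
  have hB := G.cmul_iai' (G.mul e f)
  simp only [← G.cmul_some cef] at hB
  simp only [G.cmul_assoc] at hB
  -- hB : ∀ x, g (e (f (g x))) = g x
  -- composability facts for nodes
  have cfg : G.Composable f (G.inv (G.mul e f)) := hcomp _ _ hdf hcg
  have cfge : G.Composable (G.mul f (G.inv (G.mul e f))) e := by
    apply hcomp _ _ _ hce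
    rw [G.d_mul _ _ cfg]; exact hdg
  have hdt : G.d (G.mul (G.mul f (G.inv (G.mul e f))) e) = G.d e := by
    rw [G.d_mul _ _ cfge]
  have hct : G.c (G.mul (G.mul f (G.inv (G.mul e f))) e) = G.d e := by
    rw [G.c_mul _ _ cfge, G.c_mul _ _ cfg]; exact hcf
  have cmt : G.Composable (G.mul e f) (G.mul (G.mul f (G.inv (G.mul e f))) e) :=
    hcomp _ _ hdm hct
  have cmtm : G.Composable (G.mul (G.mul e f) (G.mul (G.mul f (G.inv (G.mul e f))) e)) (G.mul e f) := by
    apply hcomp _ _ _ hcm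
    rw [G.d_mul _ _ cmt]; exact hdt
  have ctm : G.Composable (G.mul (G.mul f (G.inv (G.mul e f))) e) (G.mul e f) :=
    hcomp _ _ hdt hcm
  have ctmt : G.Composable (G.mul (G.mul (G.mul f (G.inv (G.mul e f))) e) (G.mul e f)) (G.mul (G.mul f (G.inv (G.mul e f))) e) := by
    apply hcomp _ _ _ hct
    rw [G.d_mul _ _ ctm]; exact hdm
  -- claim1 : m t m = m
  have claim1 : G.mul (G.mul (G.mul e f) (G.mul (G.mul f (G.inv (G.mul e f))) e)) (G.mul e f) = G.mul e f := by
    apply Option.some.inj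
    rw [← G.cmul_some cmtm, ← G.cmul_some cmt, ← G.cmul_some cfge, ← G.cmul_some cfg,
      ← G.cmul_some cef]
    simp only [G.cmul_assoc, hee', hff']
    exact hMbase
  -- claim2 : t m t = t
  have claim2 : G.mul (G.mul (G.mul (G.mul f (G.inv (G.mul e f))) e) (G.mul e f)) (G.mul (G.mul f (G.inv (G.mul e f))) e) = G.mul (G.mul f (G.inv (G.mul e f))) e := by
    apply Option.some.inj
    rw [← G.cmul_some ctmt, ← G.cmul_some ctm, ← G.cmul_some cfge, ← G.cmul_some cfg,
      ← G.cmul_some cef]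
    simp only [G.cmul_assoc, hee', hff', hB]
  -- t = inv m
  have ht : G.mul (G.mul f (G.inv (G.mul e f))) e = G.inv (G.mul e f) :=
    G.inv_unique (G.mul e f) _ (hdm.trans hct.symm) (hdt.trans hcm.symm) claim1 claim2
  -- g is idempotent
  have cgg : G.Composable (G.inv (G.mul e f)) (G.inv (G.mul e f)) := hcomp _ _ hdg hcg
  have ctt : G.Composable (G.mul (G.mul f (G.inv (G.mul e f))) e) (G.mul (G.mul f (G.inv (G.mul e f))) e) := hcomp _ _ hdt hct
  have claim3 : G.mul (G.mul (G.mul f (G.inv (G.mul e f))) e) (G.mul (G.mul f (G.inv (G.mul e f))) e) = G.mul (G.mul f (G.inv (G.mul e f))) e := by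
    apply Option.some.inj
    rw [← G.cmul_some ctt, ← G.cmul_some cfge, ← G.cmul_some cfg]
    simp only [G.cmul_assoc, hB]
  rw [ht] at claim3
  have hIg : G.Idem (G.inv (G.mul e f)) := ⟨cgg, claim3⟩
  have hm_eq_g : G.mul e f = G.inv (G.mul e f) :=
    (G.inv_inv (G.mul e f)).symm.trans (G.idem_inv hIg)
  rw [← hm_eq_g] at ht
  constructor
  · rw [hm_eq_g]; exact hIg
  · exact ht

lemma idem_comm {e f : S} (he : G.Idem e) (hf : G.Idem f) (hd : G.d e = G.c f) :
    G.mul e f = G.mul f e := by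
  have hd' : G.d f = G.c e := (hf.1.trans hd.symm).trans he.1
  obtain ⟨hIm, hfme⟩ := G.idem_mul_idem he hf hd
  obtain ⟨hIn, -⟩ := G.idem_mul_idem hf he hd'
  -- composabilities
  have cfe : G.Composable f e := hd'
  have cef : G.Composable e f := hd
  have cnn : G.Composable (G.mul f e) (G.mul f e) := by
    show G.d _ = G.c _
    rw [G.d_mul _ _ cfe, G.c_mul _ _ cfe]; exact hd
  have cfm : G.Composable f (G.mul e f) := by
    show G.d _ = G.c _
    rw [G.c_mul _ _ cef]; exact hd'
  have cfme : G.Composable (G.mul f (G.mul e f)) e := by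
    show G.d _ = G.c _
    rw [G.d_mul _ _ cfm, G.d_mul _ _ cef]; exact hd'
  have key : G.mul (G.mul f e) (G.mul f e) = G.mul (G.mul f (G.mul e f)) e := by
    apply Option.some.inj
    rw [← G.cmul_some cnn, ← G.cmul_some cfe, ← G.cmul_some cfme, ← G.cmul_some cfm,
      ← G.cmul_some cef]
    simp only [G.cmul_assoc]
  have hmain : G.mul f e = G.mul e f :=
    calc G.mul f e = G.mul (G.mul f e) (G.mul f e) := hIn.2.symm
      _ = G.mul (G.mul f (G.mul e f)) e := key
      _ = G.mul e f := hfme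
  exact hmain.symm

end InvSgpd

namespace InvSgpd
variable {S O : Type*} (G : InvSgpd S O)

lemma mul_inv {a b : S} (h : G.Composable a b) :
    G.inv (G.mul a b) = G.mul (G.inv b) (G.inv a) := by
  have c1 : G.Composable a b := h
  have c2 : G.Composable (G.inv b) (G.inv a) := by
    show G.d _ = G.c _; rw [G.d_inv, G.c_inv]; exact h.symm
  have c3 : G.Composable (G.mul a b) (G.mul (G.inv b) (G.inv a)) := by
    show G.d _ = G.c _; rw [G.d_mul _ _ c1, G.c_mul _ _ c2, G.c_inv]
  have c4 : G.Composable (G.mul (G.mul a b) (G.mul (G.inv b) (G.inv a))) (G.mul a b) := by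
    show G.d _ = G.c _
    rw [G.d_mul _ _ c3, G.d_mul _ _ c2, G.d_inv, G.c_mul _ _ c1]
  have c5 : G.Composable (G.mul (G.inv b) (G.inv a)) (G.mul a b) := by
    show G.d _ = G.c _; rw [G.d_mul _ _ c2, G.d_inv, G.c_mul _ _ c1]
  have c6 : G.Composable (G.mul (G.mul (G.inv b) (G.inv a)) (G.mul a b)) (G.mul (G.inv b) (G.inv a)) := by
    show G.d _ = G.c _
    rw [G.d_mul _ _ c5, G.d_mul _ _ c1, G.c_mul _ _ c2, G.c_inv]
  -- commuting idempotents b b⁻¹ and a⁻¹ a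
  have hIb : G.Idem (G.mul b (G.inv b)) := G.idem_mul_inv b
  have hIa : G.Idem (G.mul (G.inv a) a) := G.idem_inv_mul a
  have ccomm1 : G.Composable (G.mul b (G.inv b)) (G.mul (G.inv a) a) := by
    show G.d _ = G.c _
    rw [G.d_mul _ _ (G.comp_inv b), G.d_inv, G.c_mul _ _ (G.inv_comp a), G.c_inv]
    exact h.symm
  have ccomm2 : G.Composable (G.mul (G.inv a) a) (G.mul b (G.inv b)) := by
    show G.d _ = G.c _
    rw [G.d_mul _ _ (G.inv_comp a), G.c_mul _ _ (G.comp_inv b)]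
    exact h
  have hcomm := G.idem_comm hIb hIa ccomm1
  have scomm : G.cmul (G.cmul (some b) (some (G.inv b))) (G.cmul (some (G.inv a)) (some a))
      = G.cmul (G.cmul (some (G.inv a)) (some a)) (G.cmul (some b) (some (G.inv b))) := by
    rw [G.cmul_some (G.comp_inv b), G.cmul_some (G.inv_comp a), G.cmul_some ccomm1,
      G.cmul_some ccomm2, hcomm]
  have scomm' : ∀ x, G.cmul (some b) (G.cmul (some (G.inv b)) (G.cmul (some (G.inv a)) (G.cmul (some a) x)))
      = G.cmul (some (G.inv a)) (G.cmul (some a) (G.cmul (some b) (G.cmul (some (G.inv b)) x))) := by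
    intro x
    have hh := congrArg (fun y => G.cmul y x) scomm
    simpa only [G.cmul_assoc] using hh
  have scomm'' : ∀ x, G.cmul (some (G.inv a)) (G.cmul (some a) (G.cmul (some b) (G.cmul (some (G.inv b)) x)))
      = G.cmul (some b) (G.cmul (some (G.inv b)) (G.cmul (some (G.inv a)) (G.cmul (some a) x))) :=
    fun x => (scomm' x).symm
  have e1 : G.mul (G.mul (G.mul a b) (G.mul (G.inv b) (G.inv a))) (G.mul a b) = G.mul a b := by
    apply Option.some.inj
    rw [← G.cmul_some c4, ← G.cmul_some c3, ← G.cmul_some c1, ← G.cmul_some c2]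
    simp only [G.cmul_assoc, scomm', G.cmul_aia', G.cmul_aia]
  have e2 : G.mul (G.mul (G.mul (G.inv b) (G.inv a)) (G.mul a b)) (G.mul (G.inv b) (G.inv a)) = G.mul (G.inv b) (G.inv a) := by
    apply Option.some.inj
    rw [← G.cmul_some c6, ← G.cmul_some c5, ← G.cmul_some c2, ← G.cmul_some c1]
    simp only [G.cmul_assoc, scomm'', G.cmul_iai', G.cmul_iai]
  exact (G.inv_unique (G.mul a b) (G.mul (G.inv b) (G.inv a)) c3 c5 e1 e2).symm

end InvSgpd

namespace PAction
variable {S O X : Type*} {G : InvSgpd S O} (θ : PAction G X)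

lemma dom_idem {e : S} (he : G.Idem e) {x : X}
    (hx : x ∈ θ.dom (G.mul (G.inv e) e)) : x ∈ θ.dom e := by
  rwa [G.idem_inv he, he.2] at hx

open Classical in
/-- The invariant `(s,x) ↦ θ_s(x)` (defined when `x ∈ X_{s⁻¹}`). -/
noncomputable def Fval : θ.Dset → Option X := fun p =>
  if p.1.2 ∈ θ.dom (G.inv p.1.1) then some (θ.act p.1.1 p.1.2) else none

lemma act_eq_of_rel_aux {s t : S} {x y : X}
    (h1 : G.Composable (G.inv t) s)
    (h2 : x ∈ θ.dom (G.mul (G.inv s) t))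
    (h3 : θ.act (G.mul (G.inv t) s) x = y)
    (hx : x ∈ θ.dom (G.inv s)) :
    y ∈ θ.dom (G.inv t) ∧ θ.act t y = θ.act s x := by
  have h2' : x ∈ θ.dom (G.inv (G.mul (G.inv t) s)) := by
    rw [G.mul_inv h1, G.inv_inv]; exact h2
  have hb : θ.act s x ∈ θ.dom s ∩ θ.dom (G.inv (G.inv t)) := by
    have hset := θ.preimage_eq (G.inv t) s h1
    have hmem : x ∈ θ.dom (G.inv (G.mul (G.inv t) s)) ∩ θ.dom (G.inv s) := ⟨h2', hx⟩
    rw [← hset] at hmem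
    exact hmem.2
  have hbt : θ.act s x ∈ θ.dom t := by
    have := hb.2; rwa [G.inv_inv] at this
  have hc : θ.act (G.inv t) (θ.act s x) = y := by
    rw [θ.mul_act (G.inv t) s h1 x ⟨h2', hx⟩]; exact h3
  have hd : y ∈ θ.dom (G.inv t) := by
    rw [← hc]
    exact θ.maps (G.inv t) _ (by rwa [G.inv_inv])
  refine ⟨hd, ?_⟩
  have hzz : θ.act s x ∈ θ.dom (G.mul t (G.inv t)) := θ.dom_mono t hbt
  have hm1 : θ.act s x ∈ θ.dom (G.inv (G.mul t (G.inv t))) := by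
    rw [G.idem_inv (G.idem_mul_inv t)]; exact hzz
  have hm2 : θ.act s x ∈ θ.dom (G.inv (G.inv t)) := by
    rw [G.inv_inv]; exact hbt
  have he2 := θ.mul_act t (G.inv t) (G.comp_inv t) _ ⟨hm1, hm2⟩
  rw [hc] at he2
  rw [he2]
  exact θ.idem_id _ (G.idem_mul_inv t) _ hzz

lemma rel_symm_data {s t : S} {x y : X}
    (h1 : G.Composable (G.inv t) s)
    (h2 : x ∈ θ.dom (G.mul (G.inv s) t))
    (h3 : θ.act (G.mul (G.inv t) s) x = y) :
    G.Composable (G.inv s) t ∧ y ∈ θ.dom (G.mul (G.inv t) s) ∧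
      θ.act (G.mul (G.inv s) t) y = x := by
  have h2' : x ∈ θ.dom (G.inv (G.mul (G.inv t) s)) := by
    rw [G.mul_inv h1, G.inv_inv]; exact h2
  refine ⟨?_, ?_, ?_⟩
  · show G.d (G.inv s) = G.c t
    rw [G.d_inv]
    exact ((G.d_inv t).symm.trans h1).symm
  · rw [← h3]
    exact θ.maps (G.mul (G.inv t) s) x h2'
  · have hw : G.Idem (G.mul (G.inv (G.mul (G.inv t) s)) (G.mul (G.inv t) s)) :=
      G.idem_inv_mul _
    have hxw : x ∈ θ.dom (G.mul (G.inv (G.mul (G.inv t) s)) (G.mul (G.inv t) s)) := by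
      have hh := θ.dom_mono (G.inv (G.mul (G.inv t) s)) h2'
      rwa [G.inv_inv] at hh
    have hm1 : x ∈ θ.dom (G.inv (G.mul (G.inv (G.mul (G.inv t) s)) (G.mul (G.inv t) s))) := by
      rw [G.idem_inv hw]; exact hxw
    have hma := θ.mul_act (G.inv (G.mul (G.inv t) s)) (G.mul (G.inv t) s)
      (G.inv_comp _) x ⟨hm1, h2'⟩
    rw [h3, θ.idem_id _ hw x hxw] at hma
    rw [G.mul_inv h1, G.inv_inv] at hma
    exact hma

lemma Fval_rel {p q : θ.Dset} (h : θ.rel p q) : θ.Fval p = θ.Fval q := by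
  obtain ⟨⟨s, x⟩, hp⟩ := p
  obtain ⟨⟨t, y⟩, hq⟩ := q
  rcases h with ⟨h1, h2, h3⟩ | ⟨he, hf, hxy⟩
  · by_cases hx : x ∈ θ.dom (G.inv s)
    · obtain ⟨hy, hty⟩ := θ.act_eq_of_rel_aux h1 h2 h3 hx
      simp only [Fval]
      rw [if_pos hx, if_pos hy, hty]
    · have hy : y ∉ θ.dom (G.inv t) := by
        intro hy
        obtain ⟨h1', h2', h3'⟩ := θ.rel_symm_data h1 h2 h3
        obtain ⟨hx', -⟩ := θ.act_eq_of_rel_aux h1' h2' h3' hy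
        exact hx hx'
      simp only [Fval]
      rw [if_neg hx, if_neg hy]
  · have hxe : x ∈ θ.dom (G.inv s) := by
      rw [G.idem_inv he]; exact θ.dom_idem he hp
    have hyf : y ∈ θ.dom (G.inv t) := by
      rw [G.idem_inv hf]; exact θ.dom_idem hf hq
    simp only [Fval]
    rw [if_pos hxe, if_pos hyf, θ.idem_id s he x (θ.dom_idem he hp),
      θ.idem_id t hf y (θ.dom_idem hf hq)]
    exact congrArg some hxy

lemma Fval_eqvGen {p q : θ.Dset} (h : Relation.EqvGen θ.rel p q) :
    θ.Fval p = θ.Fval q := by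
  induction h with
  | rel _ _ h => exact θ.Fval_rel h
  | refl _ => rfl
  | symm _ _ _ ih => exact ih.symm
  | trans _ _ _ _ _ ih1 ih2 => exact ih1.trans ih2

lemma eq_idem_class {s f : S} {x y : X} (hf : G.Idem f)
    (hD : x ∈ θ.dom (G.mul (G.inv s) s)) (hD' : y ∈ θ.dom (G.mul (G.inv f) f))
    (h : Quotient.mk θ.relSetoid ⟨(s, x), hD⟩ = Quotient.mk θ.relSetoid ⟨(f, y), hD'⟩) :
    x ∈ θ.dom (G.inv s) ∧ θ.act s x = y := by
  have hF := θ.Fval_eqvGen (Quotient.exact h)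
  have hyf : y ∈ θ.dom (G.inv f) := by
    rw [G.idem_inv hf]; exact θ.dom_idem hf hD'
  have hr : θ.Fval ⟨(f, y), hD'⟩ = some y := by
    simp only [Fval]
    rw [if_pos hyf, θ.idem_id f hf y (θ.dom_idem hf hD')]
  rw [hr] at hF
  by_cases hx : x ∈ θ.dom (G.inv s)
  · refine ⟨hx, ?_⟩
    have hl : θ.Fval ⟨(s, x), hD⟩ = some (θ.act s x) := by
      simp only [Fval]; rw [if_pos hx]
    rw [hl] at hF
    exact Option.some.inj hF
  · exfalso
    have hl : θ.Fval ⟨(s, x), hD⟩ = none := by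
      simp only [Fval]; rw [if_neg hx]
    rw [hl] at hF
    cases hF

end PAction

/-- For the constructed globalization `(E, η)` (any partial action on `E = D/≈`
whose domains are the `E_s` and whose action is induced by `(p,x) ↦ (sp,x)`),
the map `i : X → E`, `x ↦ [e,x]` (for `e` idempotent with `x ∈ X_e`), is
injective and `η` induces `θ` through `i`: if `i(x) ∈ E_{s*}` and
`η_s(i(x)) = i(y)` then `x ∈ X_{s*}` and `θ_s(x) = y`.  Hence `(i, E, η)` is a
globalization of `(X, θ)`. -/
theorem globalization_embeds {S O X : Type*} (G : InvSgpd S O) (θ : PAction G X)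
    (P : PAction G θ.Env)
    (hdom : ∀ s, P.dom s = θ.Eset s)
    (hact : ∀ (s : S) (p : θ.Dset), G.Composable s p.1.1 →
      ∀ hm : p.1.2 ∈ θ.dom (G.mul (G.inv (G.mul s p.1.1)) (G.mul s p.1.1)),
        P.act s (Quotient.mk θ.relSetoid p)
          = Quotient.mk θ.relSetoid ⟨(G.mul s p.1.1, p.1.2), hm⟩) :
    -- `i` is injective:
    (∀ (x y : X) (e f : S), G.Idem e → G.Idem f → x ∈ θ.dom e → y ∈ θ.dom f →
      ∀ (hx : x ∈ θ.dom (G.mul (G.inv e) e)) (hy : y ∈ θ.dom (G.mul (G.inv f) f)),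
        Quotient.mk θ.relSetoid ⟨(e, x), hx⟩ = Quotient.mk θ.relSetoid ⟨(f, y), hy⟩ →
        x = y) ∧
    -- `η` induces `θ` through `i`:
    (∀ (s : S) (x y : X) (e f : S), G.Idem e → G.Idem f →
      x ∈ θ.dom e → y ∈ θ.dom f →
      ∀ (hx : x ∈ θ.dom (G.mul (G.inv e) e)) (hy : y ∈ θ.dom (G.mul (G.inv f) f)),
        Quotient.mk θ.relSetoid ⟨(e, x), hx⟩ ∈ P.dom (G.inv s) →
        P.act s (Quotient.mk θ.relSetoid ⟨(e, x), hx⟩)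
          = Quotient.mk θ.relSetoid ⟨(f, y), hy⟩ →
        x ∈ θ.dom (G.inv s) ∧ θ.act s x = y) := by
  constructor
  · intro x y e f he hf hxe hyf hx hy h
    obtain ⟨hx', hxy⟩ := θ.eq_idem_class hf hx hy h
    rwa [θ.idem_id e he x (θ.dom_idem he hx)] at hxy
  · intro s x y e f he hf hxe hyf hx hy hmem heq
    rw [hdom] at hmem
    obtain ⟨p, hp, hc, hd⟩ := hmem
    obtain ⟨⟨p1, z⟩, hDp⟩ := p
    rw [G.inv_inv] at hc hd
    have key : G.mul (G.inv (G.mul s p1)) (G.mul s p1)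
        = G.mul (G.inv p1) (G.mul (G.mul (G.inv s) s) p1) := by
      rw [G.mul_inv hc,
        G.assoc (G.inv p1) (G.inv s) (G.mul s p1)
          (by show G.d _ = G.c _; rw [G.d_inv, G.c_inv]; exact hc.symm)
          (by show G.d _ = G.c _; rw [G.d_inv, G.c_mul _ _ hc]),
        ← G.assoc (G.inv s) s p1 (G.inv_comp s) hc]
    have hm : z ∈ θ.dom (G.mul (G.inv (G.mul s p1)) (G.mul s p1)) := by
      rw [key]; exact hd
    have hactp := hact s ⟨(p1, z), hDp⟩ hc hm
    rw [hp] at hactp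
    rw [hactp] at heq
    obtain ⟨hz1, hzy⟩ := θ.eq_idem_class hf hm hy heq
    obtain ⟨hz2, hzx⟩ := θ.eq_idem_class he hDp hx hp
    constructor
    · have hset := θ.preimage_eq s p1 hc
      have hmm : z ∈ θ.dom (G.inv (G.mul s p1)) ∩ θ.dom (G.inv p1) := ⟨hz1, hz2⟩
      rw [← hset] at hmm
      have h2 := hmm.2
      rw [hzx] at h2
      exact h2.2
    · have hma := θ.mul_act s p1 hc z ⟨hz1, hz2⟩
      rw [hzx, hzy] at hma
      exact hma
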